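/- arXiv:1707.04014 — 2 statements merged into one kernel-verified Lean document; each statement's English description precedes it below -/
import Mathlib

section
/- Let Σ ⊂ ℝⁿ be a compact smooth embedded k-dimensional submanifold without boundary and let (p,q) : [0,T) → Σ × Σ be a chord shortening flow relative to Σ. Then the chord length ℓ(t) = |p(t) − q(t)| is differentiable in t and satisfies dℓ/dt = −‖η^T‖² = −(|η^T(p)|² + |η^T(q)|²) ≤ 0; in particular ℓ is a non-increasing function of t. -/
open scoped RealInnerProductSpace ENNReal
open Set Filter

noncomputable section

/-- Euclidean `n`-space. -/
abbrev Euc (n : ℕ) := EuclideanSpace ℝ (Fin n)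

/-- The orthogonal projection `π_K` onto a submodule `K`, as a map `Euc n → Euc n`. -/
def projSM {n : ℕ} (K : Submodule ℝ (Euc n)) (v : Euc n) : Euc n :=
  (K.orthogonalProjection v : Euc n)

/-- `S` is a smooth embedded `k`-dimensional submanifold (without boundary) of `ℝⁿ`,
whose tangent space at each `x ∈ S` is the `k`-dimensional subspace `T x ⊆ ℝⁿ`:
every point of `S` has a neighbourhood in `S` which is the image of a smooth injective
parametrization, which is a homeomorphism onto its image, with injective differential whose
range is the assigned tangent space. -/
def IsSubmanifold (n k : ℕ) (S : Set (Euc n)) (T : Euc n → Submodule ℝ (Euc n)) : Prop :=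
  ∀ x ∈ S, ∃ (f : Euc k → Euc n) (u : Set (Euc k)) (v : Set (Euc n)),
    IsOpen u ∧ IsOpen v ∧ x ∈ v ∧ ContDiffOn ℝ (⊤ : ℕ∞) f u ∧ Set.InjOn f u ∧
    f '' u = S ∩ v ∧
    (∀ s ⊆ u, IsOpen s → ∃ w : Set (Euc n), IsOpen w ∧ f '' s = S ∩ w) ∧
    ∀ y ∈ u, Function.Injective (fderiv ℝ f y) ∧
      LinearMap.range ((fderiv ℝ f y) : Euc k →ₗ[ℝ] Euc n) = T (f y)

/-- The tangential part `η^T(x) = π_{T x}((x - y)/|x - y|)` of the outward unit conormal at `x`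
of the chord from `x` to `y`. -/
def conormalT {n : ℕ} (T : Euc n → Submodule ℝ (Euc n)) (x y : Euc n) : Euc n :=
  projSM (T x) (‖x - y‖⁻¹ • (x - y))

/-- A chord shortening flow relative to `S` (with tangent spaces `T`) on the time domain `dom`:
a pair of C¹ curves `p q : dom → S` with `p t ≠ q t`, satisfying
`p' = -π_{p}((p-q)/|p-q|)` and `q' = -π_{q}((q-p)/|q-p|)`. -/
def IsCSFOn {n : ℕ} (S : Set (Euc n)) (T : Euc n → Submodule ℝ (Euc n))
    (dom : Set ℝ) (p q : ℝ → Euc n) : Prop :=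
  ∀ t ∈ dom, p t ∈ S ∧ q t ∈ S ∧ p t ≠ q t ∧
    HasDerivWithinAt p (-(conormalT T (p t) (q t))) dom t ∧
    HasDerivWithinAt q (-(conormalT T (q t) (p t))) dom t

/-- The time interval `[0, Tm)` (where possibly `Tm = ∞`). -/
def csfDomain (Tm : ℝ≥0∞) : Set ℝ := {t : ℝ | 0 ≤ t ∧ ENNReal.ofReal t < Tm}

/-- A maximal chord shortening flow: one defined on `[0, Tm)` which cannot be extended to a
chord shortening flow on a strictly larger interval `[0, Tm')`. -/
def IsMaximalCSF {n : ℕ} (S : Set (Euc n)) (T : Euc n → Submodule ℝ (Euc n))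
    (Tm : ℝ≥0∞) (p q : ℝ → Euc n) : Prop :=
  IsCSFOn S T (csfDomain Tm) p q ∧
  ∀ Tm' : ℝ≥0∞, Tm < Tm' → ∀ p' q' : ℝ → Euc n,
    IsCSFOn S T (csfDomain Tm') p' q' →
    ¬ (∀ t ∈ csfDomain Tm, p' t = p t ∧ q' t = q t)


private lemma inner_projSM {n : ℕ} (K : Submodule ℝ (Euc n)) (v : Euc n) :
    ⟪v, projSM K v⟫ = ‖projSM K v‖ ^ 2 := by
  have h1 : v - projSM K v ∈ Kᗮ := K.sub_starProjection_mem_orthogonal v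
  have h2' : ⟪projSM K v, v - projSM K v⟫ = 0 :=
    h1 (projSM K v) (K.orthogonalProjection v).2
  have h2 : ⟪v - projSM K v, projSM K v⟫ = 0 := by
    rw [real_inner_comm]; exact h2'
  have h3 := inner_sub_left (𝕜 := ℝ) v (projSM K v) (projSM K v)
  rw [h2] at h3
  rw [real_inner_self_eq_norm_sq] at h3
  linarith

private lemma projSM_neg {n : ℕ} (K : Submodule ℝ (Euc n)) (v : Euc n) :
    projSM K (-v) = -projSM K v := by
  simp [projSM]

private lemma convex_csfDomain (Tm : ℝ≥0∞) : Convex ℝ (csfDomain Tm) := by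
  rw [convex_iff_ordConnected]
  constructor
  intro x hx y hy z hz
  exact ⟨le_trans hx.1 hz.1, lt_of_le_of_lt (ENNReal.ofReal_le_ofReal hz.2) hy.2⟩

private lemma deriv_value {n : ℕ} (T : Euc n → Submodule ℝ (Euc n)) (x y : Euc n) (hxy : x ≠ y) :
    1 / (2 * Real.sqrt ⟪x - y, x - y⟫) *
      (⟪x - y, -(conormalT T x y) - -(conormalT T y x)⟫ +
       ⟪-(conormalT T x y) - -(conormalT T y x), x - y⟫) =
    -(‖conormalT T x y‖ ^ 2 + ‖conormalT T y x‖ ^ 2) := by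
  have hv : x - y ≠ 0 := sub_ne_zero_of_ne hxy
  set v : Euc n := x - y with hvdef
  set ℓ : ℝ := ‖v‖ with hℓ
  have hℓpos : 0 < ℓ := norm_pos_iff.mpr hv
  set u : Euc n := ℓ⁻¹ • v with hu
  have hvu : v = ℓ • u := by rw [hu, smul_inv_smul₀ (ne_of_gt hℓpos)]
  have hsqrt : Real.sqrt ⟪v, v⟫ = ℓ := by
    rw [real_inner_self_eq_norm_sq, Real.sqrt_sq hℓpos.le]
  have hcP : conormalT T x y = projSM (T x) u := rfl
  have hcQ : conormalT T y x = -(projSM (T y) u) := by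
    rw [conormalT, show y - x = -(x - y) from (neg_sub _ _).symm, norm_neg, smul_neg,
      projSM_neg, ← hvdef, ← hℓ, ← hu]
  set f' : Euc n := -(conormalT T x y) - -(conormalT T y x) with hf'
  have hA : ⟪u, f'⟫ = -(‖conormalT T x y‖ ^ 2 + ‖conormalT T y x‖ ^ 2) := by
    rw [hf', inner_sub_right, inner_neg_right, inner_neg_right, hcP, hcQ,
      inner_neg_right, inner_projSM, inner_projSM, norm_neg]
    ring
  have hAv : ⟪v, f'⟫ = ℓ * -(‖conormalT T x y‖ ^ 2 + ‖conormalT T y x‖ ^ 2) := by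
    rw [hvu, real_inner_smul_left, hA]
  have hAv' : ⟪f', v⟫ = ℓ * -(‖conormalT T x y‖ ^ 2 + ‖conormalT T y x‖ ^ 2) := by
    rw [real_inner_comm]; exact hAv
  rw [hsqrt, hAv, hAv']
  field_simp
  ring

/-- **Evolution of chord length.** Under the chord shortening flow, the chord length
`ℓ(t) = |p(t) - q(t)|` satisfies `dℓ/dt = -‖η^T‖² ≤ 0`; in particular `ℓ` is non-increasing. -/
theorem chord_statement_4 (n k : ℕ) (S : Set (Euc n)) (T : Euc n → Submodule ℝ (Euc n))
    (hsub : IsSubmanifold n k S T) (hcpt : IsCompact S)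
    (Tm : ℝ≥0∞) (p q : ℝ → Euc n) (hflow : IsCSFOn S T (csfDomain Tm) p q) :
    (∀ t ∈ csfDomain Tm,
      HasDerivWithinAt (fun s => ‖p s - q s‖)
        (-(‖conormalT T (p t) (q t)‖ ^ 2 + ‖conormalT T (q t) (p t)‖ ^ 2))
        (csfDomain Tm) t ∧
      -(‖conormalT T (p t) (q t)‖ ^ 2 + ‖conormalT T (q t) (p t)‖ ^ 2) ≤ 0) ∧
    ∀ s ∈ csfDomain Tm, ∀ t ∈ csfDomain Tm, s ≤ t → ‖p t - q t‖ ≤ ‖p s - q s‖ := by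
  have key : ∀ t ∈ csfDomain Tm, HasDerivWithinAt (fun s => ‖p s - q s‖)
      (-(‖conormalT T (p t) (q t)‖ ^ 2 + ‖conormalT T (q t) (p t)‖ ^ 2))
      (csfDomain Tm) t := by
    intro t ht
    obtain ⟨-, -, hne, hp', hq'⟩ := hflow t ht
    have hf : HasDerivWithinAt (fun s => p s - q s)
        (-(conormalT T (p t) (q t)) - -(conormalT T (q t) (p t))) (csfDomain Tm) t :=
      hp'.sub hq'
    have hg := hf.inner ℝ hf
    have hsq : ⟪p t - q t, p t - q t⟫ ≠ 0 := by
      rw [real_inner_self_eq_norm_sq]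
      exact pow_ne_zero _ (norm_ne_zero_iff.mpr (sub_ne_zero_of_ne hne))
    have hsqrt := (Real.hasDerivAt_sqrt hsq).comp_hasDerivWithinAt t hg
    rw [← deriv_value T (p t) (q t) hne]
    exact hsqrt.congr (fun y _ => norm_eq_sqrt_real_inner _)
      (norm_eq_sqrt_real_inner _)
  refine ⟨fun t ht => ⟨key t ht, neg_nonpos.mpr (by positivity)⟩, ?_⟩
  have hanti : AntitoneOn (fun s => ‖p s - q s‖) (csfDomain Tm) := by
    apply antitoneOn_of_deriv_nonpos (convex_csfDomain Tm)
    · exact fun x hx => (key x hx).continuousWithinAt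
    · intro x hx
      exact (((key x (interior_subset hx)).hasDerivAt
        (mem_interior_iff_mem_nhds.mp hx)).differentiableAt).differentiableWithinAt
    · intro x hx
      rw [((key x (interior_subset hx)).hasDerivAt (mem_interior_iff_mem_nhds.mp hx)).deriv]
      exact neg_nonpos.mpr (by positivity)
  exact fun s hs t ht hst => hanti hs ht hst


end
end

section
/- Let Σ ⊂ ℝⁿ be a compact smooth embedded k-dimensional submanifold without boundary and let (p,q) : [0,T) → Σ × Σ be a chord shortening flow relative to Σ. Then at the endpoint p(t) the tangential conormal satisfies the evolution equation d/dt η^T(p) = −(η^T(p) − η^T(q))/ℓ + (1/ℓ)‖η^T‖² η^T(p) − W − (1/ℓ) P^N_p(η^T(q)) − A(η^T(p), η^T(p)), where: ℓ = ℓ(t) = |p(t)−q(t)|; P^N_p denotes the orthogonal projection of ℝⁿ onto the orthogonal complement of T_pΣ; η^N(p) = η(p) − η^T(p); A is the second fundamental form of Σ at p; and W is the unique vector in T_pΣ satisfying ⟨W, v⟩ = ⟨A(η^T(p), v), η^N(p)⟩ for all v ∈ T_pΣ (equivalently W = Σ_{i=1}^k ⟨A(η^T(p), e_i), η^N(p)⟩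 e_i for any orthonormal basis {e_i} of T_pΣ). The same equation holds at q(t) with the roles of p and q interchanged. -/
open scoped RealInnerProductSpace ENNReal
open Set Filter

noncomputable section

open scoped Topology

def adjCLM (k n : ℕ) : (Euc k →L[ℝ] Euc n) →L[ℝ] (Euc n →L[ℝ] Euc k) :=
  LinearMap.toContinuousLinearMap
    { toFun := fun A => ContinuousLinearMap.adjoint A
      map_add' := fun A B => map_add _ A B
      map_smul' := fun c A => by
        simp [ContinuousLinearMap.adjoint.map_smulₛₗ, starRingEnd_apply, star_trivial] }

@[simp] lemma adjCLM_apply (k n : ℕ) (A : Euc k →L[ℝ] Euc n) :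
    adjCLM k n A = ContinuousLinearMap.adjoint A := rfl

lemma exists_localProj {n k : ℕ} {S : Set (Euc n)} {T : Euc n → Submodule ℝ (Euc n)}
    (hsub : IsSubmanifold n k S T) {x₀ : Euc n} (hx₀ : x₀ ∈ S) :
    ∃ (P : Euc n → (Euc n →L[ℝ] Euc n)) (w : Set (Euc n)),
      IsOpen w ∧ x₀ ∈ w ∧ DifferentiableAt ℝ P x₀ ∧
      (∀ x ∈ w, ∀ z, P x (P x z) = P x z) ∧
      (∀ x ∈ w, ∀ a b, ⟪P x a, b⟫ = ⟪a, P x b⟫) ∧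
      (∀ y ∈ S ∩ w, ∀ z, P y z = projSM (T y) z) := by
  obtain ⟨f, u, v, hu, hv, hxv, hf, hinjf, himg, hopen, htan⟩ := hsub x₀ hx₀
  have hx₀' : x₀ ∈ f '' u := by rw [himg]; exact ⟨hx₀, hxv⟩
  obtain ⟨y₀, hy₀u, hfy₀⟩ := hx₀'
  -- the derivative field
  set B : Euc k → (Euc k →L[ℝ] Euc n) := fun y => fderiv ℝ f y with hBdef
  have hBdiffOn : ContDiffOn ℝ (⊤ : ℕ∞) B u := by
    have := hf.fderiv_of_isOpen hu (m := (⊤ : ℕ∞)) (by simp)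
    exact this
  have hBdiff : ∀ y ∈ u, DifferentiableAt ℝ B y := fun y hy =>
    ((hBdiffOn.contDiffAt (hu.mem_nhds hy)).differentiableAt (by simp))
  -- Gram matrix
  set Gr : Euc k → (Euc k →L[ℝ] Euc k) :=
    fun y => (ContinuousLinearMap.adjoint (B y)).comp (B y) with hGrdef
  have hGrdiff : ∀ y ∈ u, DifferentiableAt ℝ Gr y := fun y hy => by
    have h1 : DifferentiableAt ℝ (fun y => ContinuousLinearMap.adjoint (B y)) y :=
      ((adjCLM k n).differentiableAt).comp y (hBdiff y hy)
    exact h1.clm_comp (hBdiff y hy)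
  -- Gram is self-adjoint-ish and a unit on u
  have hGrinner : ∀ y, ∀ a b, ⟪Gr y a, b⟫ = ⟪a, Gr y b⟫ := by
    intro y a b
    simp only [hGrdef, ContinuousLinearMap.comp_apply]
    rw [ContinuousLinearMap.adjoint_inner_left, ← ContinuousLinearMap.adjoint_inner_right]
  have hGrunit : ∀ y ∈ u, IsUnit (Gr y) := by
    intro y hy
    rw [ContinuousLinearMap.isUnit_iff_bijective]
    have hinj : Function.Injective (Gr y) := by
      have h0 : ∀ a, Gr y a = 0 → a = 0 := by
        intro a ha
        have : ⟪Gr y a, a⟫ = 0 := by rw [ha]; simp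
        rw [hGrdef] at this
        simp only [ContinuousLinearMap.comp_apply] at this
        rw [ContinuousLinearMap.adjoint_inner_left] at this
        have hBa : B y a = 0 := by
          have := (inner_self_eq_zero (𝕜 := ℝ)).mp this
          exact this
        exact (htan y hy).1 (by simpa using hBa)
      intro a b hab
      have : Gr y (a - b) = 0 := by rw [map_sub, hab, sub_self]
      exact sub_eq_zero.mp (h0 _ this)
    exact ⟨hinj, LinearMap.injective_iff_surjective.mp hinj⟩
  -- inverse of the Gram matrix
  set J : Euc k → (Euc k →L[ℝ] Euc k) := fun y => Ring.inverse (Gr y) with hJdef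
  have hJGr : ∀ y, IsUnit (Gr y) → ∀ a, J y (Gr y a) = a := by
    intro y hy a
    have h : (J y) * (Gr y) = 1 := Ring.inverse_mul_cancel _ hy
    have := congrArg (fun A : Euc k →L[ℝ] Euc k => A a) h
    simpa [ContinuousLinearMap.mul_apply] using this
  have hGrJ : ∀ y, IsUnit (Gr y) → ∀ a, Gr y (J y a) = a := by
    intro y hy a
    have h : (Gr y) * (J y) = 1 := Ring.mul_inverse_cancel _ hy
    have := congrArg (fun A : Euc k →L[ℝ] Euc k => A a) h
    simpa [ContinuousLinearMap.mul_apply] using this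
  have hJinner : ∀ y, IsUnit (Gr y) → ∀ a b, ⟪J y a, b⟫ = ⟪a, J y b⟫ := by
    intro y hy a b
    conv_lhs => rw [← hGrJ y hy b]
    rw [← hGrinner, hGrJ y hy]
  -- the projection field in the chart
  set Q : Euc k → (Euc n →L[ℝ] Euc n) :=
    fun y => ((B y).comp (J y)).comp (ContinuousLinearMap.adjoint (B y)) with hQdef
  have hQapp : ∀ y z, Q y z = B y (J y (ContinuousLinearMap.adjoint (B y) z)) := fun y z => rfl
  have hadjQ : ∀ y, IsUnit (Gr y) → ∀ z,
      ContinuousLinearMap.adjoint (B y) (Q y z) = ContinuousLinearMap.adjoint (B y) z := by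
    intro y hy z
    rw [hQapp]
    exact hGrJ y hy _
  have hQidem : ∀ y, IsUnit (Gr y) → ∀ z, Q y (Q y z) = Q y z := by
    intro y hy z
    conv_lhs => rw [hQapp, hadjQ y hy]
    exact (hQapp y z).symm
  have hQsym : ∀ y, IsUnit (Gr y) → ∀ a b, ⟪Q y a, b⟫ = ⟪a, Q y b⟫ := by
    intro y hy a b
    rw [hQapp, hQapp, ← ContinuousLinearMap.adjoint_inner_right (B y), hJinner y hy,
      ContinuousLinearMap.adjoint_inner_left]
  have hQproj : ∀ y ∈ u, ∀ z, Q y z = projSM (T (f y)) z := by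
    intro y hy z
    have hmem : Q y z ∈ T (f y) := by
      rw [← (htan y hy).2]
      exact ⟨J y (ContinuousLinearMap.adjoint (B y) z), rfl⟩
    symm
    refine Submodule.eq_starProjection_of_mem_of_inner_eq_zero hmem ?_
    intro w hw
    rw [← (htan y hy).2] at hw
    obtain ⟨a, rfl⟩ := hw
    show ⟪z - Q y z, B y a⟫ = 0
    rw [← ContinuousLinearMap.adjoint_inner_left, map_sub, hadjQ y (hGrunit y hy), sub_self,
      inner_zero_left]
  have hQdiffy₀ : DifferentiableAt ℝ Q y₀ := by
    have hBd := hBdiff y₀ hy₀u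
    have hAd : DifferentiableAt ℝ (fun y => ContinuousLinearMap.adjoint (B y)) y₀ :=
      ((adjCLM k n).differentiableAt).comp y₀ hBd
    have hJd : DifferentiableAt ℝ J y₀ :=
      (hGrdiff y₀ hy₀u).inverse (hGrunit y₀ hy₀u)
    exact (hBd.clm_comp hJd).clm_comp hAd
  -- inverse function theorem: a smooth local left inverse G of f near x₀
  set L : Euc n →L[ℝ] Euc k := (J y₀).comp (ContinuousLinearMap.adjoint (B y₀)) with hLdef
  have hLB : ∀ a, L (B y₀ a) = a := fun a => hJGr y₀ (hGrunit y₀ hy₀u) a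
  set F : Euc k → Euc k := fun y => L (f y) with hFdef
  have hfd : DifferentiableAt ℝ f y₀ :=
    (hf.contDiffAt (hu.mem_nhds hy₀u)).differentiableAt (by simp)
  have hFderiv : HasFDerivAt F ((1 : Euc k →L[ℝ] Euc k)) y₀ := by
    have h := L.hasFDerivAt.comp y₀ hfd.hasFDerivAt
    have he : L.comp (fderiv ℝ f y₀) = (1 : Euc k →L[ℝ] Euc k) :=
      ContinuousLinearMap.ext fun a => by simpa using hLB a
    rw [he] at h
    exact h
  have hFc : ContDiffAt ℝ (⊤ : ℕ∞) F y₀ :=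
    (L.contDiff.contDiffAt).comp y₀ (hf.contDiffAt (hu.mem_nhds hy₀u))
  have hFs : HasStrictFDerivAt F
      ((ContinuousLinearEquiv.refl ℝ (Euc k) : Euc k ≃L[ℝ] Euc k) :
        Euc k →L[ℝ] Euc k) y₀ := by
    have h := hFc.hasStrictFDerivAt (by simp)
    rw [hFderiv.fderiv] at h
    exact h
  set G0 := hFs.localInverse F _ y₀ with hG0def
  have hG0left : ∀ᶠ y in 𝓝 y₀, G0 (F y) = y := hFs.eventually_left_inverse
  have hG0y₀ : G0 (F y₀) = y₀ := hG0left.self_of_nhds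
  have hG0diff : DifferentiableAt ℝ G0 (F y₀) :=
    hFs.to_localInverse.differentiableAt
  set G : Euc n → Euc k := fun x => G0 (L x) with hGdef
  have hLx₀ : L x₀ = F y₀ := by rw [← hfy₀]
  have hGx₀ : G x₀ = y₀ := by rw [hGdef]; simp only; rw [hLx₀, hG0y₀]
  have hGdiffat : DifferentiableAt ℝ G x₀ := by
    have h : DifferentiableAt ℝ G0 (L x₀) := by rw [hLx₀]; exact hG0diff
    exact h.comp x₀ L.differentiableAt
  set P : Euc n → (Euc n →L[ℝ] Euc n) := fun x => Q (G x) with hPdef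
  have hPdiff : DifferentiableAt ℝ P x₀ := by
    have h : DifferentiableAt ℝ Q (G x₀) := by rw [hGx₀]; exact hQdiffy₀
    exact h.comp x₀ hGdiffat
  -- choice of the neighbourhood
  have ev1 : ∀ᶠ y in 𝓝 y₀, IsUnit (Gr y) :=
    (hGrdiff y₀ hy₀u).continuousAt.preimage_mem_nhds
      (Units.isOpen.mem_nhds (hGrunit y₀ hy₀u))
  have evy : ∀ᶠ y in 𝓝 y₀, (IsUnit (Gr y) ∧ G0 (F y) = y) ∧ y ∈ u :=
    (ev1.and hG0left).and (hu.mem_nhds hy₀u)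
  obtain ⟨u₀, hu₀sub, hu₀open, hy₀u₀⟩ := mem_nhds_iff.mp evy
  have hu₀u : u₀ ⊆ u := fun y hy => (hu₀sub hy).2
  obtain ⟨w₁, hw₁open, hw₁img⟩ := hopen u₀ hu₀u hu₀open
  have evx : ∀ᶠ x in 𝓝 x₀, IsUnit (Gr (G x)) := by
    have hcont : ContinuousAt (fun x => Gr (G x)) x₀ := by
      have h1 : ContinuousAt Gr (G x₀) := by
        rw [hGx₀]; exact (hGrdiff y₀ hy₀u).continuousAt
      exact h1.comp hGdiffat.continuousAt
    refine hcont.preimage_mem_nhds (Units.isOpen.mem_nhds ?_)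
    show IsUnit (Gr (G x₀))
    rw [hGx₀]; exact hGrunit y₀ hy₀u
  obtain ⟨o, hosub, hoopen, hx₀o⟩ := mem_nhds_iff.mp evx
  have hx₀w₁ : x₀ ∈ w₁ := by
    have : x₀ ∈ S ∩ w₁ := by rw [← hw₁img]; exact ⟨y₀, hy₀u₀, hfy₀⟩
    exact this.2
  refine ⟨P, w₁ ∩ o, hw₁open.inter hoopen, ⟨hx₀w₁, hx₀o⟩, hPdiff, ?_, ?_, ?_⟩
  · intro x hx z
    exact hQidem (G x) (hosub hx.2) z
  · intro x hx a b
    exact hQsym (G x) (hosub hx.2) a b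
  · intro y hy z
    have hy1 : y ∈ S ∩ w₁ := ⟨hy.1, hy.2.1⟩
    rw [← hw₁img] at hy1
    obtain ⟨zp, hzp, rfl⟩ := hy1
    have hGfz : G (f zp) = zp := (hu₀sub hzp).1.2
    have : P (f zp) = Q zp := by rw [hPdef]; simp only; rw [hGfz]
    rw [this]
    exact hQproj zp (hu₀u hzp) z

set_option maxHeartbeats 2000000 in
lemma key_lemma {n k : ℕ} {S : Set (Euc n)} {T : Euc n → Submodule ℝ (Euc n)}
    (hsub : IsSubmanifold n k S T) {dom : Set ℝ} {p q : ℝ → Euc n}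
    (hmemS : ∀ s ∈ dom, p s ∈ S)
    (A : Euc n → Euc n → Euc n → Euc n)
    {t : ℝ} (ht : t ∈ dom)
    (hps : p t ∈ S) (hne : p t ≠ q t)
    (hp' : HasDerivWithinAt p (-(conormalT T (p t) (q t))) dom t)
    (hq' : HasDerivWithinAt q (-(conormalT T (q t) (p t))) dom t)
    (hAx : ∀ u v : Euc n, u ∈ T (p t) → v ∈ T (p t) →
      ∀ V : Euc n → Euc n, DifferentiableAt ℝ V (p t) → (∀ y ∈ S, V y ∈ T y) → V (p t) = v →
        A (p t) u v = fderiv ℝ V (p t) u - projSM (T (p t)) (fderiv ℝ V (p t) u))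
    (Wt : Euc n)
    (hWt : Wt ∈ T (p t) ∧ ∀ v ∈ T (p t),
      ⟪Wt, v⟫ = ⟪A (p t) (conormalT T (p t) (q t)) v,
        ‖p t - q t‖⁻¹ • (p t - q t) - conormalT T (p t) (q t)⟫) :
    HasDerivWithinAt (fun s => conormalT T (p s) (q s))
      (-(‖p t - q t‖⁻¹ • (conormalT T (p t) (q t) - conormalT T (q t) (p t)))
        + (‖p t - q t‖⁻¹ * (‖conormalT T (p t) (q t)‖ ^ 2 + ‖conormalT T (q t) (p t)‖ ^ 2)) •
            conormalT T (p t) (q t)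
        - Wt
        - ‖p t - q t‖⁻¹ •
            (conormalT T (q t) (p t) - projSM (T (p t)) (conormalT T (q t) (p t)))
        - A (p t) (conormalT T (p t) (q t)) (conormalT T (p t) (q t)))
      dom t := by
  obtain ⟨P, w, hwopen, hx₀w, hPdiff, hidem, hsym, hproj⟩ := exists_localProj hsub hps
  set x₀ : Euc n := p t with hx₀def
  set ηT : Euc n := conormalT T (p t) (q t) with hηTdef
  set κ : Euc n := conormalT T (q t) (p t) with hκdef
  set r : ℝ → Euc n := fun s => p s - q s with hrdef
  set ℓ : ℝ → ℝ := fun s => ‖r s‖ with hℓdef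
  have hrt : r t ≠ 0 := sub_ne_zero.mpr hne
  have hℓt : ℓ t ≠ 0 := norm_ne_zero_iff.mpr hrt
  set ηv : Euc n := (ℓ t)⁻¹ • r t with hηvdef
  set ηN : Euc n := ηv - ηT with hηNdef
  -- derivative of r
  have hr' : HasDerivWithinAt r (κ - ηT) dom t := by
    have h := hp'.sub hq'
    have : -ηT - -κ = κ - ηT := by abel
    rwa [this] at h
  set N : ℝ := ‖ηT‖ ^ 2 + ‖κ‖ ^ 2 with hNdef
  -- inner product computations
  have hηT_proj : ηT = projSM (T (p t)) ηv := rfl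
  have hinner_ηT : ⟪ηv, ηT⟫ = ‖ηT‖ ^ 2 := by
    have horth : ⟪ηv - ηT, ηT⟫ = 0 := by
      rw [hηT_proj]
      exact Submodule.starProjection_inner_eq_zero ηv _ (SetLike.coe_mem _)
    have : ⟪ηv, ηT⟫ = ⟪ηT, ηT⟫ + ⟪ηv - ηT, ηT⟫ := by
      rw [← inner_add_left]; rw [add_sub_cancel]
    rw [this, horth, real_inner_self_eq_norm_sq, add_zero]
  have hμ : ‖q t - p t‖⁻¹ • (q t - p t) = -ηv := by
    rw [hηvdef, hℓdef, hrdef]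
    simp only [norm_sub_rev (q t) (p t)]
    rw [show q t - p t = -(p t - q t) by abel, smul_neg]
  have hκ_proj : κ = projSM (T (q t)) (-ηv) := by rw [hκdef, conormalT, hμ]
  have hinner_κ : ⟪ηv, κ⟫ = -‖κ‖ ^ 2 := by
    have horth : ⟪-ηv - κ, κ⟫ = 0 := by
      rw [hκ_proj]
      exact Submodule.starProjection_inner_eq_zero (-ηv) _ (SetLike.coe_mem _)
    have hexp : ⟪-ηv, κ⟫ = ⟪κ, κ⟫ + ⟪-ηv - κ, κ⟫ := by
      rw [← inner_add_left]; rw [add_sub_cancel]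
    rw [show ⟪ηv, κ⟫ = -⟪-ηv, κ⟫ by rw [inner_neg_left]; ring]
    rw [hexp, horth, real_inner_self_eq_norm_sq, add_zero]
  have hrη : r t = ℓ t • ηv := by rw [hηvdef, smul_smul, mul_inv_cancel₀ hℓt, one_smul]
  have hinner_rr' : ⟪r t, κ - ηT⟫ = ℓ t * (-N) := by
    rw [hrη, real_inner_smul_left, inner_sub_right, hinner_κ, hinner_ηT, hNdef]
    ring
  -- derivative of ℓ
  have hℓ' : HasDerivWithinAt ℓ (-N) dom t := by
    have hrr : HasDerivWithinAt (fun s => ⟪r s, r s⟫)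
        (⟪r t, κ - ηT⟫ + ⟪κ - ηT, r t⟫) dom t := hr'.inner (𝕜 := ℝ) hr'
    have hne0 : ⟪r t, r t⟫ ≠ 0 := by
      rw [real_inner_self_eq_norm_sq]
      positivity
    have hsq := hrr.sqrt hne0
    have hfun : (fun s => Real.sqrt ⟪r s, r s⟫) = ℓ := by
      funext s
      rw [real_inner_self_eq_norm_sq, Real.sqrt_sq (norm_nonneg _)]
    rw [hfun] at hsq
    convert hsq using 1
    have h2 : ⟪κ - ηT, r t⟫ = ℓ t * -N := by
      rw [real_inner_comm]; exact hinner_rr'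
    rw [real_inner_comm (κ - ηT) (r t), h2, real_inner_self_eq_norm_sq,
      Real.sqrt_sq (norm_nonneg _)]
    field_simp
    ring
  -- derivative of the unit chord
  set η : ℝ → Euc n := fun s => (ℓ s)⁻¹ • r s with hηdef
  set η' : Euc n := (ℓ t)⁻¹ • (κ - ηT) + (N / ℓ t ^ 2) • r t with hη'def
  have hηderiv : HasDerivWithinAt η η' dom t := by
    have hinv : HasDerivWithinAt (fun s => (ℓ s)⁻¹) (-(-N) / ℓ t ^ 2) dom t := hℓ'.inv hℓt
    have h := hinv.smul hr'
    rw [hη'def]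
    rw [neg_neg] at h
    exact h
  -- the derivative of P ∘ p
  set DP : Euc n →L[ℝ] (Euc n →L[ℝ] Euc n) := fderiv ℝ P x₀ with hDPdef
  have hPp : HasDerivWithinAt (fun s => P (p s)) (DP (-ηT)) dom t := by
    have h := (hPdiff.hasFDerivAt).comp_hasDerivWithinAt t hp'
    exact h
  have hfull : HasDerivWithinAt (fun s => (P (p s)) (η s))
      (DP (-ηT) (η t) + (P (p t)) η') dom t := hPp.clm_apply hηderiv
  -- the function agrees with conormalT on dom near t
  have hcongr : (fun s => conormalT T (p s) (q s)) =ᶠ[nhdsWithin t dom]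
      (fun s => (P (p s)) (η s)) := by
    have hmemw : ∀ᶠ s in nhdsWithin t dom, p s ∈ w :=
      hp'.continuousWithinAt (hwopen.mem_nhds hx₀w)
    have hmemdom : ∀ᶠ s in nhdsWithin t dom, s ∈ dom := self_mem_nhdsWithin
    filter_upwards [hmemw, hmemdom] with s hsw hsdom
    rw [conormalT, ← hproj (p s) ⟨hmemS s hsdom, hsw⟩]
  have hx₀eq : conormalT T (p t) (q t) = (P (p t)) (η t) := by
    rw [conormalT, ← hproj (p t) ⟨hps, hx₀w⟩]
  have hfinal : HasDerivWithinAt (fun s => conormalT T (p s) (q s))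
      (DP (-ηT) (η t) + (P (p t)) η') dom t :=
    hfull.congr_of_eventuallyEq hcongr hx₀eq
  -- algebraic identities at x₀
  have hPproj : ∀ z, P x₀ z = projSM (T x₀) z := hproj x₀ ⟨hps, hx₀w⟩
  have hPmem : ∀ z, P x₀ z ∈ T x₀ := fun z => by
    rw [hPproj]; exact SetLike.coe_mem ((T x₀).orthogonalProjection z)
  have hPfix : ∀ z ∈ T x₀, P x₀ z = z := fun z hz => by
    rw [hPproj]; exact Submodule.starProjection_eq_self_iff.mpr hz
  have hηT_eq : P x₀ ηv = ηT := (hPproj ηv).symm ▸ rfl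
  have hηT_mem : ηT ∈ T x₀ := by rw [← hηT_eq]; exact hPmem ηv
  have hPηT : P x₀ ηT = ηT := hPfix ηT hηT_mem
  have hPηN : P x₀ ηN = 0 := by
    rw [hηNdef, map_sub, hηT_eq, hPηT, sub_self]
  -- eventual equality facts for differentiation
  have hwev : w ∈ nhds x₀ := hwopen.mem_nhds hx₀w
  -- derivative of x ↦ P x z
  have happly : ∀ z : Euc n, HasFDerivAt (fun x => P x z) (DP.flip z) x₀ := by
    intro z
    have h := (hPdiff.hasFDerivAt).clm_apply (hasFDerivAt_const z x₀)
    have he : (P x₀).comp (0 : Euc n →L[ℝ] Euc n) + DP.flip z = DP.flip z := by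
      rw [ContinuousLinearMap.comp_zero, zero_add]
    rwa [he] at h
  -- key identity (1): DP u z = P₀ (DP u z) + DP u (P₀ z)
  have hkey1 : ∀ (uu z : Euc n), DP uu z = P x₀ (DP uu z) + DP uu (P x₀ z) := by
    intro uu z
    have hg1diff : DifferentiableAt ℝ (fun x => P x z) x₀ := (happly z).differentiableAt
    have hg2 : HasFDerivAt (fun x => P x (P x z))
        ((P x₀).comp (DP.flip z) + DP.flip (P x₀ z)) x₀ :=
      (hPdiff.hasFDerivAt).clm_apply (happly z)
    have hev : (fun x => P x (P x z)) =ᶠ[nhds x₀] (fun x => P x z) := by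
      filter_upwards [hwev] with x hx
      exact hidem x hx z
    have heq : (P x₀).comp (DP.flip z) + DP.flip (P x₀ z) = DP.flip z := by
      rw [← hg2.fderiv, ← (happly z).fderiv]
      exact hev.fderiv_eq
    have := congrArg (fun (M : Euc n →L[ℝ] Euc n) => M uu) heq
    simpa using this.symm
  -- key identity (2): symmetry of DP u
  have hkey2 : ∀ (uu a b : Euc n), ⟪DP uu a, b⟫ = ⟪a, DP uu b⟫ := by
    intro uu a b
    have hfa : HasFDerivAt (fun x => (⟪b, P x a⟫ : ℝ))
        ((innerSL ℝ b).comp (DP.flip a)) x₀ :=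
      (innerSL ℝ b).hasFDerivAt.comp x₀ (happly a)
    have hfb : HasFDerivAt (fun x => (⟪a, P x b⟫ : ℝ))
        ((innerSL ℝ a).comp (DP.flip b)) x₀ :=
      (innerSL ℝ a).hasFDerivAt.comp x₀ (happly b)
    have hsub : HasFDerivAt (fun x => (⟪b, P x a⟫ - ⟪a, P x b⟫ : ℝ))
        ((innerSL ℝ b).comp (DP.flip a) - (innerSL ℝ a).comp (DP.flip b)) x₀ := hfa.sub hfb
    have hev : (fun x => (⟪b, P x a⟫ - ⟪a, P x b⟫ : ℝ)) =ᶠ[nhds x₀] (fun _ => (0 : ℝ)) := by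
      filter_upwards [hwev] with x hx
      rw [real_inner_comm (P x a) b, hsym x hx a b, sub_self]
    have heq : (innerSL ℝ b).comp (DP.flip a) - (innerSL ℝ a).comp (DP.flip b) = 0 := by
      rw [← hsub.fderiv]
      rw [hev.fderiv_eq]
      exact fderiv_const_apply 0
    have := congrArg (fun (M : Euc n →L[ℝ] ℝ) => M uu) heq
    simp only [ContinuousLinearMap.sub_apply, ContinuousLinearMap.comp_apply,
      ContinuousLinearMap.flip_apply, ContinuousLinearMap.zero_apply, innerSL_apply_apply] at this
    have h2 : (⟪b, DP uu a⟫ : ℝ) = ⟪a, DP uu b⟫ := by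
      have h3 : (⟪b, DP uu a⟫ : ℝ) - ⟪a, DP uu b⟫ = 0 := this
      linarith
    rw [real_inner_comm b (DP uu a)]
    exact h2
  -- the second fundamental form in terms of DP
  classical
  have hAv : ∀ v ∈ T x₀, A x₀ ηT v = DP ηT v - P x₀ (DP ηT v) := by
    intro v hv
    set V : Euc n → Euc n := fun x => if x ∈ w then P x v else 0 with hVdef
    have hVev : V =ᶠ[nhds x₀] (fun x => P x v) := by
      filter_upwards [hwev] with x hx
      rw [hVdef]; simp only [if_pos hx]
    have hVdiff : DifferentiableAt ℝ V x₀ :=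
      (Filter.EventuallyEq.differentiableAt_iff hVev).mpr (happly v).differentiableAt
    have hVfderiv : fderiv ℝ V x₀ = DP.flip v := by
      rw [hVev.fderiv_eq, (happly v).fderiv]
    have htang : ∀ y ∈ S, V y ∈ T y := by
      intro y hy
      rw [hVdef]
      by_cases hyw : y ∈ w
      · simp only [if_pos hyw]
        have := hproj y ⟨hy, hyw⟩ v
        rw [this]
        exact SetLike.coe_mem ((T y).orthogonalProjection v)
      · simp only [if_neg hyw]
        exact Submodule.zero_mem _
    have hVx₀ : V x₀ = v := by
      rw [hVdef]; simp only [if_pos hx₀w]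
      exact hPfix v hv
    have h := hAx ηT v hηT_mem hv V hVdiff htang hVx₀
    rw [hVfderiv] at h
    rw [h, ← hPproj]
    simp only [ContinuousLinearMap.flip_apply]
  -- A(ηT, ηT) and W in terms of DP
  have hPDPηT : P x₀ (DP ηT ηT) = 0 := by
    have h := hkey1 ηT ηT
    rw [hPηT] at h
    nth_rewrite 1 [← zero_add (DP ηT ηT)] at h
    exact (add_right_cancel h).symm
  have hAηTηT : A x₀ ηT ηT = DP ηT ηT := by
    rw [hAv ηT hηT_mem, hPDPηT, sub_zero]
  have hDPηN : DP ηT ηN = P x₀ (DP ηT ηN) := by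
    have h := hkey1 ηT ηN
    rw [hPηN, map_zero, add_zero] at h
    exact h
  -- identification of W
  have hWeq : Wt = P x₀ (DP ηT ηN) := by
    have hdmem : Wt - P x₀ (DP ηT ηN) ∈ T x₀ := Submodule.sub_mem _ hWt.1 (hPmem _)
    have hzero : ∀ v ∈ T x₀, ⟪Wt - P x₀ (DP ηT ηN), v⟫ = 0 := by
      intro v hv
      rw [inner_sub_left]
      have h1 : ⟪Wt, v⟫ = ⟪A x₀ ηT v, ηN⟫ := hWt.2 v hv
      rw [h1, hAv v hv, inner_sub_left]
      have h2 : ⟪P x₀ (DP ηT v), ηN⟫ = 0 := by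
        rw [hsym x₀ hx₀w, hPηN, inner_zero_right]
      rw [h2, sub_zero]
      rw [hkey2 ηT v ηN]
      nth_rewrite 1 [hDPηN]
      rw [real_inner_comm (P x₀ (DP ηT ηN)) v, sub_self]
    have hz := hzero _ hdmem
    rwa [inner_self_eq_zero, sub_eq_zero] at hz
  -- final assembly
  have hsplit : ηv = ηT + ηN := by rw [hηNdef]; abel
  have hDPηv : DP ηT ηv = A x₀ ηT ηT + Wt := by
    rw [hsplit, map_add, hAηTηT, hWeq, ← hDPηN]
  have hPκ : projSM (T (p t)) κ = P x₀ κ := (hPproj κ).symm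
  have hPrt : P x₀ (r t) = ℓ t • ηT := by rw [hrη, map_smul, hηT_eq]
  have hsc : (N / ℓ t ^ 2) * ℓ t = (ℓ t)⁻¹ * N := by
    field_simp
  have h1 : DP (-ηT) (η t) = -(A x₀ ηT ηT + Wt) := by
    rw [map_neg, ContinuousLinearMap.neg_apply]
    show -(DP ηT ηv) = _
    rw [hDPηv]
  have h2 : (P (p t)) η' = (ℓ t)⁻¹ • (P x₀ κ - ηT) + ((ℓ t)⁻¹ * N) • ηT := by
    show P x₀ η' = _
    rw [hη'def, map_add, map_smul, map_smul, map_sub, hPηT, hPrt, smul_smul, hsc]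
  have hnorm : ‖p t - q t‖ = ℓ t := rfl
  convert hfinal using 1
  rw [h1, h2, hPκ, hnorm]
  module

/-- **Evolution of the tangential conormal.** Under the chord shortening flow,
`d/dt η^T(p) = -(η^T(p) - η^T(q))/ℓ + (1/ℓ)‖η^T‖² η^T(p) - W_p - (1/ℓ)P^N_p(η^T(q))
 - A(η^T(p), η^T(p))`, and symmetrically at `q`.  Here `A` is the second fundamental form
(characterized by `A(u,v) = ` the normal part of `D_u V` for any differentiable vector field `V`
tangent to `S` with `V x = v`), and `W_p ∈ T_pΣ` is the Weingarten-type vector determined by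
`⟨W_p, v⟩ = ⟨A(η^T(p), v), η^N(p)⟩` for all tangent `v`. -/
theorem chord_statement_5 (n k : ℕ) (S : Set (Euc n)) (T : Euc n → Submodule ℝ (Euc n))
    (hsub : IsSubmanifold n k S T) (hcpt : IsCompact S)
    (Tm : ℝ≥0∞) (p q : ℝ → Euc n) (hflow : IsCSFOn S T (csfDomain Tm) p q)
    (A : Euc n → Euc n → Euc n → Euc n)
    (hA : ∀ x ∈ S, ∀ u v : Euc n, u ∈ T x → v ∈ T x →
      ∀ V : Euc n → Euc n, DifferentiableAt ℝ V x → (∀ y ∈ S, V y ∈ T y) → V x = v →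
        A x u v = fderiv ℝ V x u - projSM (T x) (fderiv ℝ V x u))
    (Wp Wq : ℝ → Euc n)
    (hWp : ∀ t ∈ csfDomain Tm, Wp t ∈ T (p t) ∧ ∀ v ∈ T (p t),
      ⟪Wp t, v⟫ = ⟪A (p t) (conormalT T (p t) (q t)) v,
        ‖p t - q t‖⁻¹ • (p t - q t) - conormalT T (p t) (q t)⟫)
    (hWq : ∀ t ∈ csfDomain Tm, Wq t ∈ T (q t) ∧ ∀ v ∈ T (q t),
      ⟪Wq t, v⟫ = ⟪A (q t) (conormalT T (q t) (p t)) v,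
        ‖q t - p t‖⁻¹ • (q t - p t) - conormalT T (q t) (p t)⟫) :
    ∀ t ∈ csfDomain Tm,
      HasDerivWithinAt (fun s => conormalT T (p s) (q s))
        (-(‖p t - q t‖⁻¹ • (conormalT T (p t) (q t) - conormalT T (q t) (p t)))
          + (‖p t - q t‖⁻¹ * (‖conormalT T (p t) (q t)‖ ^ 2 + ‖conormalT T (q t) (p t)‖ ^ 2)) •
              conormalT T (p t) (q t)
          - Wp t
          - ‖p t - q t‖⁻¹ •
              (conormalT T (q t) (p t) - projSM (T (p t)) (conormalT T (q t) (p t)))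
          - A (p t) (conormalT T (p t) (q t)) (conormalT T (p t) (q t)))
        (csfDomain Tm) t ∧
      HasDerivWithinAt (fun s => conormalT T (q s) (p s))
        (-(‖q t - p t‖⁻¹ • (conormalT T (q t) (p t) - conormalT T (p t) (q t)))
          + (‖q t - p t‖⁻¹ * (‖conormalT T (p t) (q t)‖ ^ 2 + ‖conormalT T (q t) (p t)‖ ^ 2)) •
              conormalT T (q t) (p t)
          - Wq t
          - ‖q t - p t‖⁻¹ •
              (conormalT T (p t) (q t) - projSM (T (q t)) (conormalT T (p t) (q t)))
          - A (q t) (conormalT T (q t) (p t)) (conormalT T (q t) (p t)))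
        (csfDomain Tm) t := by
  intro t ht
  obtain ⟨hps, hqs, hne, hp', hq'⟩ := hflow t ht
  constructor
  · exact key_lemma hsub (fun s hs => (hflow s hs).1) A ht hps hne hp' hq'
      (hA (p t) hps) (Wp t) (hWp t ht)
  · have hkey := key_lemma (p := q) (q := p) hsub (fun s hs => (hflow s hs).2.1) A ht hqs
      (Ne.symm hne) hq' hp' (hA (q t) hqs) (Wq t) (hWq t ht)
    rw [show (‖conormalT T (p t) (q t)‖ ^ 2 + ‖conormalT T (q t) (p t)‖ ^ 2)
        = (‖conormalT T (q t) (p t)‖ ^ 2 + ‖conormalT T (p t) (q t)‖ ^ 2) from add_comm _ _]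
    exact hkey


end
end
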